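/- Let h be a 5-dimensional Lie subalgebra of T*sl(2,ℝ) that is degenerate with respect to the canonical bilinear form ⟨u+α, v+β⟩ = α(v) + β(u). Then there exists a Lie algebra automorphism F of sl(2,ℝ) such that T*F(h) = span(e_1,e_3) ⊕ sl(2,ℝ)*, where T*F is the automorphism of T*sl(2,ℝ) given by T*F(u+α) = F(u) + α∘F^{−1}. -/

import Mathlib

section TStarExtension

variable {L : Type*} [LieRing L] [LieAlgebra ℝ L]

/-- The Lie ring structure of the `T*`-extension `T*g = g ⊕ g*` of a real Lie algebra `g`:
`[u + α, v + β] = [u,v] + ad*_u β − ad*_v α`, where `(ad*_u α)(v) = −α([u,v])`.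
(Here `⁅u, β⁆ = ad*_u β` is the coadjoint action of Mathlib's
`Module.Dual.instLieRingModule`, for which `⁅u, β⁆ v = −β ⁅u, v⁆`.) -/
instance tstarLieRing : LieRing (L × Module.Dual ℝ L) where
  bracket x y := (⁅x.1, y.1⁆, ⁅x.1, y.2⁆ - ⁅y.1, x.2⁆)
  add_lie x y z := by
    refine Prod.ext ?_ ?_
    · show ⁅(x + y).1, z.1⁆ = (⁅x.1, z.1⁆ + ⁅y.1, z.1⁆ : L)
      simp [add_lie]
    · show ⁅(x + y).1, z.2⁆ - ⁅z.1, (x + y).2⁆ =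
        (⁅x.1, z.2⁆ - ⁅z.1, x.2⁆) + (⁅y.1, z.2⁆ - ⁅z.1, y.2⁆)
      simp only [Prod.fst_add, Prod.snd_add, add_lie, lie_add]
      abel
  lie_add x y z := by
    refine Prod.ext ?_ ?_
    · show ⁅x.1, (y + z).1⁆ = (⁅x.1, y.1⁆ + ⁅x.1, z.1⁆ : L)
      simp [lie_add]
    · show ⁅x.1, (y + z).2⁆ - ⁅(y + z).1, x.2⁆ =
        (⁅x.1, y.2⁆ - ⁅y.1, x.2⁆) + (⁅x.1, z.2⁆ - ⁅z.1, x.2⁆)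
      simp only [Prod.fst_add, Prod.snd_add, add_lie, lie_add]
      abel
  lie_self x := by
    refine Prod.ext ?_ ?_
    · show ⁅x.1, x.1⁆ = (0 : L)
      simp
    · show ⁅x.1, x.2⁆ - ⁅x.1, x.2⁆ = (0 : Module.Dual ℝ L)
      simp
  leibniz_lie x y z := by
    refine Prod.ext ?_ ?_
    · show ⁅x.1, ⁅y.1, z.1⁆⁆ = (⁅⁅x.1, y.1⁆, z.1⁆ + ⁅y.1, ⁅x.1, z.1⁆⁆ : L)
      exact leibniz_lie _ _ _
    · show ⁅x.1, ⁅y.1, z.2⁆ - ⁅z.1, y.2⁆⁆ - ⁅⁅y.1, z.1⁆, x.2⁆ =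
        (⁅⁅x.1, y.1⁆, z.2⁆ - ⁅z.1, ⁅x.1, y.2⁆ - ⁅y.1, x.2⁆⁆) +
        (⁅y.1, ⁅x.1, z.2⁆ - ⁅z.1, x.2⁆⁆ - ⁅⁅x.1, z.1⁆, y.2⁆)
      simp only [lie_lie, lie_sub]
      abel

/-- The `T*`-extension is a Lie algebra over `ℝ`. -/
noncomputable instance tstarLieAlgebra : LieAlgebra ℝ (L × Module.Dual ℝ L) where
  lie_smul t x y := by
    refine Prod.ext ?_ ?_
    · show ⁅x.1, (t • y).1⁆ = t • ⁅x.1, y.1⁆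
      rw [Prod.smul_fst, lie_smul]
    · show ⁅x.1, (t • y).2⁆ - ⁅(t • y).1, x.2⁆ = t • (⁅x.1, y.2⁆ - ⁅y.1, x.2⁆)
      ext m
      simp only [Prod.smul_fst, Prod.smul_snd, LinearMap.sub_apply, LinearMap.smul_apply,
        Module.Dual.lie_apply, smul_lie, map_smul, smul_eq_mul, smul_sub]
      ring

/-- The canonical invariant bilinear form of the `T*`-extension:
`⟨u + α, v + β⟩ = α(v) + β(u)`. -/
def tstarForm (x y : L × Module.Dual ℝ L) : ℝ := x.2 y.1 + y.2 x.1

end TStarExtension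


section SL2Aux
open Module

variable {L : Type*} [LieRing L] [LieAlgebra ℝ L]

private lemma map_lie_of_basis {ι : Type*} (b : Basis ι ℝ L) (f : L →ₗ[ℝ] L)
    (h : ∀ i j, f ⁅b i, b j⁆ = ⁅f (b i), f (b j)⁆) (x y : L) :
    f ⁅x, y⁆ = ⁅f x, f y⁆ := by
  let B1 : L →ₗ[ℝ] L →ₗ[ℝ] L := LinearMap.mk₂ ℝ (fun x y => f ⁅x, y⁆)
    (fun m n p => by simp [add_lie]) (fun c m n => by simp [smul_lie])
    (fun m n p => by simp [lie_add]) (fun c m n => by simp [lie_smul])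
  let B2 : L →ₗ[ℝ] L →ₗ[ℝ] L := LinearMap.mk₂ ℝ (fun x y => ⁅f x, f y⁆)
    (fun m n p => by simp [add_lie]) (fun c m n => by simp [smul_lie])
    (fun m n p => by simp [lie_add]) (fun c m n => by simp [lie_smul])
  have hB : B1 = B2 := b.ext fun i => b.ext fun j => h i j
  exact LinearMap.congr_fun (LinearMap.congr_fun hB x) y

noncomputable def mkAut (b : Basis (Fin 3) ℝ L) (M N : Fin 3 → L)
    (h1 : ∀ i, b.constr ℝ M (N i) = b i)
    (h2 : ∀ i, b.constr ℝ N (M i) = b i)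
    (hb01 : b.constr ℝ M ⁅b 0, b 1⁆ = ⁅M 0, M 1⁆)
    (hb20 : b.constr ℝ M ⁅b 2, b 0⁆ = ⁅M 2, M 0⁆)
    (hb21 : b.constr ℝ M ⁅b 2, b 1⁆ = ⁅M 2, M 1⁆) : L ≃ₗ⁅ℝ⁆ L :=
  { toLinearMap := b.constr ℝ M
    map_lie' := by
      intro x y
      have e : ∀ i, b.constr ℝ M (b i) = M i := fun i => b.constr_basis ℝ M i
      have skew : ∀ (u v : L), b.constr ℝ M ⁅u, v⁆ = ⁅b.constr ℝ M u, b.constr ℝ M v⁆ →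
          b.constr ℝ M ⁅v, u⁆ = ⁅b.constr ℝ M v, b.constr ℝ M u⁆ := by
        intro u v h
        rw [← lie_skew (x := v) (y := u), map_neg, h, lie_skew]
      have hb01' : b.constr ℝ M ⁅b 0, b 1⁆ = ⁅b.constr ℝ M (b 0), b.constr ℝ M (b 1)⁆ := by
        rw [e, e]; exact hb01
      have hb20' : b.constr ℝ M ⁅b 2, b 0⁆ = ⁅b.constr ℝ M (b 2), b.constr ℝ M (b 0)⁆ := by
        rw [e, e]; exact hb20
      have hb21' : b.constr ℝ M ⁅b 2, b 1⁆ = ⁅b.constr ℝ M (b 2), b.constr ℝ M (b 1)⁆ := by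
        rw [e, e]; exact hb21
      have hb10' := skew _ _ hb01'
      have hb02' := skew _ _ hb20'
      have hb12' := skew _ _ hb21'
      have key : ∀ i j, b.constr ℝ M ⁅b i, b j⁆ = ⁅b.constr ℝ M (b i), b.constr ℝ M (b j)⁆ := by
        intro i j
        fin_cases i <;> fin_cases j <;>
          first
            | (rw [lie_self, map_zero, lie_self])
            | exact hb01' | exact hb20' | exact hb21'
            | exact hb10' | exact hb02' | exact hb12'
      exact map_lie_of_basis b _ key x y
    invFun := b.constr ℝ N
    left_inv := by
      intro x
      have : (b.constr ℝ N).comp (b.constr ℝ M) = LinearMap.id :=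
        b.ext fun i => by simp [Basis.constr_basis, h2]
      exact LinearMap.congr_fun this x
    right_inv := by
      intro x
      have : (b.constr ℝ M).comp (b.constr ℝ N) = LinearMap.id :=
        b.ext fun i => by simp [Basis.constr_basis, h1]
      exact LinearMap.congr_fun this x }

lemma mkAut_coe (b : Basis (Fin 3) ℝ L) (M N : Fin 3 → L) (h1 h2 hb01 hb20 hb21) :
    ((mkAut b M N h1 h2 hb01 hb20 hb21).toLinearEquiv : L →ₗ[ℝ] L) = b.constr ℝ M := rfl

lemma mkAut_symm_coe (b : Basis (Fin 3) ℝ L) (M N : Fin 3 → L) (h1 h2 hb01 hb20 hb21) :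
    ((mkAut b M N h1 h2 hb01 hb20 hb21).toLinearEquiv.symm : L →ₗ[ℝ] L) = b.constr ℝ N := rfl



private lemma no_one_dim_ideal (b : Basis (Fin 3) ℝ L)
    (h12 : ⁅b 0, b 1⁆ = b 2)
    (h31 : ⁅b 2, b 0⁆ = (2 : ℝ) • b 0)
    (h32 : ⁅b 2, b 1⁆ = (-2 : ℝ) • b 1)
    (v : L) (hv : v ≠ 0)
    (hid : ∀ u : L, ⁅u, v⁆ ∈ Submodule.span ℝ {v}) : False := by
  classical
  have h21 : ⁅b 1, b 0⁆ = -b 2 := by rw [← lie_skew, h12]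
  have h02 : ⁅b 0, b 2⁆ = -((2:ℝ) • b 0) := by rw [← lie_skew, h31]
  have h12' : ⁅b 1, b 2⁆ = -((-2:ℝ) • b 1) := by rw [← lie_skew, h32]
  set A := b.repr v 0 with hA
  set B := b.repr v 1 with hB
  set C := b.repr v 2 with hC
  have hveq : v = A • b 0 + B • b 1 + C • b 2 := by
    have := b.sum_repr v
    rw [Fin.sum_univ_three] at this
    exact this.symm
  obtain ⟨l, hl⟩ := Submodule.mem_span_singleton.mp (hid (b 2))
  obtain ⟨m, hm⟩ := Submodule.mem_span_singleton.mp (hid (b 0))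
  obtain ⟨n, hn⟩ := Submodule.mem_span_singleton.mp (hid (b 1))
  have e2 : (2*A) • b 0 + (-2*B) • b 1 + (0:ℝ) • b 2
      = (l*A) • b 0 + (l*B) • b 1 + (l*C) • b 2 := by
    calc (2*A) • b 0 + (-2*B) • b 1 + (0:ℝ) • b 2
        = ⁅b 2, A • b 0 + B • b 1 + C • b 2⁆ := by
          rw [lie_add, lie_add, lie_smul, lie_smul, lie_smul, h31, h32, lie_self]
          module
      _ = l • v := by rw [← hveq]; exact hl.symm
      _ = (l*A) • b 0 + (l*B) • b 1 + (l*C) • b 2 := by rw [hveq]; module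
  have e0 : (-2*C) • b 0 + (0:ℝ) • b 1 + B • b 2
      = (m*A) • b 0 + (m*B) • b 1 + (m*C) • b 2 := by
    calc (-2*C) • b 0 + (0:ℝ) • b 1 + B • b 2
        = ⁅b 0, A • b 0 + B • b 1 + C • b 2⁆ := by
          rw [lie_add, lie_add, lie_smul, lie_smul, lie_smul, h12, h02, lie_self]
          module
      _ = m • v := by rw [← hveq]; exact hm.symm
      _ = (m*A) • b 0 + (m*B) • b 1 + (m*C) • b 2 := by rw [hveq]; module
  have e1 : (0:ℝ) • b 0 + (2*C) • b 1 + (-A) • b 2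
      = (n*A) • b 0 + (n*B) • b 1 + (n*C) • b 2 := by
    calc (0:ℝ) • b 0 + (2*C) • b 1 + (-A) • b 2
        = ⁅b 1, A • b 0 + B • b 1 + C • b 2⁆ := by
          rw [lie_add, lie_add, lie_smul, lie_smul, lie_smul, h21, h12', lie_self]
          module
      _ = n • v := by rw [← hveq]; exact hn.symm
      _ = (n*A) • b 0 + (n*B) • b 1 + (n*C) • b 2 := by rw [hveq]; module
  have lin : ∀ (x y z x' y' z' : ℝ), x • b 0 + y • b 1 + z • b 2
      = x' • b 0 + y' • b 1 + z' • b 2 → x = x' ∧ y = y' ∧ z = z' := by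
    intro x y z x' y' z' h
    have h0 : (x - x') • b 0 + (y - y') • b 1 + (z - z') • b 2 = 0 := by
      linear_combination (norm := module) h
    have hli := Fintype.linearIndependent_iff.mp b.linearIndependent ![x-x', y-y', z-z']
      (by rw [Fin.sum_univ_three]; simpa using h0)
    refine ⟨sub_eq_zero.mp (hli 0), sub_eq_zero.mp (hli 1), sub_eq_zero.mp (hli 2)⟩
  obtain ⟨E1, E2, E3⟩ := lin _ _ _ _ _ _ e2
  obtain ⟨F1, F2, F3⟩ := lin _ _ _ _ _ _ e0
  obtain ⟨G1, G2, G3⟩ := lin _ _ _ _ _ _ e1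
  have hABC : ¬ (A = 0 ∧ B = 0 ∧ C = 0) := by
    rintro ⟨ha, hb', hc⟩
    apply hv
    rw [hveq, ha, hb', hc]
    simp
  rcases eq_or_ne C 0 with hc | hc
  · apply hABC
    have hB0 : B = 0 := by rw [F3, hc, mul_zero]
    have hA0 : A = 0 := by have := G3; rw [hc, mul_zero] at this; linarith
    exact ⟨hA0, hB0, hc⟩
  · have hl0 : l = 0 := by
      rcases mul_eq_zero.mp E3.symm with h | h
      · exact h
      · exact absurd h hc
    have hA0 : A = 0 := by rw [hl0, zero_mul] at E1; linarith
    have hC0 : C = 0 := by rw [hA0, mul_zero] at F1; linarith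
    exact hc hC0

private lemma no_invariant_two_dim (b : Basis (Fin 3) ℝ L)
    (h12 : ⁅b 0, b 1⁆ = b 2)
    (h31 : ⁅b 2, b 0⁆ = (2 : ℝ) • b 0)
    (h32 : ⁅b 2, b 1⁆ = (-2 : ℝ) • b 1)
    (N : Submodule ℝ (Module.Dual ℝ L)) (hN2 : finrank ℝ N = 2)
    (hinv : ∀ α ∈ N, ∀ u : L, ⁅u, α⁆ ∈ N) : False := by
  haveI : FiniteDimensional ℝ L := Module.Finite.of_basis b
  have hfinL : finrank ℝ L = 3 := by rw [finrank_eq_card_basis b, Fintype.card_fin]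
  have hW := Subspace.finrank_add_finrank_dualCoannihilator_eq N
  rw [hN2, hfinL] at hW
  have hW1 : finrank ℝ N.dualCoannihilator = 1 := by omega
  obtain ⟨v, hvW, hv0⟩ := Submodule.exists_mem_ne_zero_of_ne_bot
    (p := N.dualCoannihilator) (by
      intro hbot
      rw [hbot, finrank_bot] at hW1
      omega)
  have hspan : Submodule.span ℝ {v} = N.dualCoannihilator := by
    apply Submodule.eq_of_le_of_finrank_eq
    · rw [Submodule.span_le, Set.singleton_subset_iff]
      exact hvW
    · rw [finrank_span_singleton hv0, hW1]
  refine no_one_dim_ideal b h12 h31 h32 v hv0 ?_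
  intro u
  rw [hspan, Submodule.mem_dualCoannihilator]
  intro φ hφ
  have h2 := (Submodule.mem_dualCoannihilator v).mp hvW ⁅u, φ⁆ (hinv φ hφ u)
  rw [Module.Dual.lie_apply, neg_eq_zero] at h2
  exact h2

private lemma span_b0_b2 (b : Basis (Fin 3) ℝ L) :
    Submodule.span ℝ {b 0, b 2} = LinearMap.ker (b.coord 1) := by
  apply le_antisymm
  · rw [Submodule.span_le]
    rintro x hx
    simp only [Set.mem_insert_iff, Set.mem_singleton_iff] at hx
    rcases hx with rfl | rfl <;>
      simp [LinearMap.mem_ker, Basis.coord_apply, Basis.repr_self]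
  · intro x hx
    rw [LinearMap.mem_ker, Basis.coord_apply] at hx
    have hxe := b.sum_repr x
    rw [Fin.sum_univ_three] at hxe
    rw [← hxe, hx, zero_smul, add_zero]
    exact Submodule.add_mem _
      (Submodule.smul_mem _ _ (Submodule.subset_span (by simp)))
      (Submodule.smul_mem _ _ (Submodule.subset_span (by simp)))

private lemma quadric (b : Basis (Fin 3) ℝ L)
    (h12 : ⁅b 0, b 1⁆ = b 2)
    (h31 : ⁅b 2, b 0⁆ = (2 : ℝ) • b 0)
    (h32 : ⁅b 2, b 1⁆ = (-2 : ℝ) • b 1)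
    (φ : Module.Dual ℝ L) (hφ : φ ≠ 0)
    (hK : ∀ u v : L, φ u = 0 → φ v = 0 → φ ⁅u, v⁆ = 0) :
    φ (b 2) ^ 2 + 4 * (φ (b 0) * φ (b 1)) = 0 := by
  have h21 : ⁅b 1, b 0⁆ = -b 2 := by rw [← lie_skew, h12]
  have h02 : ⁅b 0, b 2⁆ = -((2:ℝ) • b 0) := by rw [← lie_skew, h31]
  have h12' : ⁅b 1, b 2⁆ = -((-2:ℝ) • b 1) := by rw [← lie_skew, h32]
  set p := φ (b 0) with hp
  set q := φ (b 1) with hq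
  set r := φ (b 2) with hr
  have m1 : φ (q • b 0 - p • b 1) = 0 := by
    rw [map_sub, map_smul, map_smul]; simp only [smul_eq_mul, ← hp, ← hq]; ring
  have m2 : φ (r • b 0 - p • b 2) = 0 := by
    rw [map_sub, map_smul, map_smul]; simp only [smul_eq_mul, ← hp, ← hr]; ring
  have m3 : φ (r • b 1 - q • b 2) = 0 := by
    rw [map_sub, map_smul, map_smul]; simp only [smul_eq_mul, ← hq, ← hr]; ring
  have e12 : ⁅q • b 0 - p • b 1, r • b 0 - p • b 2⁆
      = (2*(p*q)) • b 0 + (2*(p*p)) • b 1 + (p*r) • b 2 := by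
    simp only [lie_sub, sub_lie, lie_smul, smul_lie, lie_self, h12, h21, h02, h12', h31, h32]
    module
  have e13 : ⁅q • b 0 - p • b 1, r • b 1 - q • b 2⁆
      = (2*(q*q)) • b 0 + (2*(p*q)) • b 1 + (q*r) • b 2 := by
    simp only [lie_sub, sub_lie, lie_smul, smul_lie, lie_self, h12, h21, h02, h12', h31, h32]
    module
  have e23 : ⁅r • b 0 - p • b 2, r • b 1 - q • b 2⁆
      = (2*(q*r)) • b 0 + (2*(p*r)) • b 1 + (r*r) • b 2 := by
    simp only [lie_sub, sub_lie, lie_smul, smul_lie, lie_self, h12, h21, h02, h12', h31, h32]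
    module
  have c12 := hK _ _ m1 m2
  have c13 := hK _ _ m1 m3
  have c23 := hK _ _ m2 m3
  rw [e12, map_add, map_add, map_smul, map_smul, map_smul] at c12
  rw [e13, map_add, map_add, map_smul, map_smul, map_smul] at c13
  rw [e23, map_add, map_add, map_smul, map_smul, map_smul] at c23
  simp only [smul_eq_mul, ← hp, ← hq, ← hr] at c12 c13 c23
  -- c12 : 2*(p*q)*p + 2*(p*p)*q + p*r*r = 0  etc.
  have hnz : p ≠ 0 ∨ q ≠ 0 ∨ r ≠ 0 := by
    by_contra hcon
    push_neg at hcon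
    obtain ⟨hp0, hq0, hr0⟩ := hcon
    apply hφ
    refine b.ext fun i => ?_
    fin_cases i
    · exact hp0
    · exact hq0
    · exact hr0
  rcases hnz with h | h | h
  · have : p * (r ^ 2 + 4 * (p * q)) = 0 := by linear_combination c12
    rcases mul_eq_zero.mp this with h' | h'
    · exact absurd h' h
    · exact h'
  · have : q * (r ^ 2 + 4 * (p * q)) = 0 := by linear_combination c13
    rcases mul_eq_zero.mp this with h' | h'
    · exact absurd h' h
    · exact h'
  · have : r * (r ^ 2 + 4 * (p * q)) = 0 := by linear_combination c23
    rcases mul_eq_zero.mp this with h' | h'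
    · exact absurd h' h
    · exact h'

private lemma exists_aut (b : Basis (Fin 3) ℝ L)
    (h12 : ⁅b 0, b 1⁆ = b 2)
    (h31 : ⁅b 2, b 0⁆ = (2 : ℝ) • b 0)
    (h32 : ⁅b 2, b 1⁆ = (-2 : ℝ) • b 1)
    (φ : Module.Dual ℝ L) (hφ : φ ≠ 0)
    (hquad : φ (b 2) ^ 2 + 4 * (φ (b 0) * φ (b 1)) = 0) :
    ∃ F : L ≃ₗ⁅ℝ⁆ L, ∃ c : ℝ, c ≠ 0 ∧
      (b.coord 1).comp (F.toLinearEquiv : L →ₗ[ℝ] L) = c • φ := by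
  have h21 : ⁅b 1, b 0⁆ = -b 2 := by rw [← lie_skew, h12]
  have h02 : ⁅b 0, b 2⁆ = -((2:ℝ) • b 0) := by rw [← lie_skew, h31]
  have h12' : ⁅b 1, b 2⁆ = -((-2:ℝ) • b 1) := by rw [← lie_skew, h32]
  set p := φ (b 0) with hp
  set q := φ (b 1) with hq
  set r := φ (b 2) with hr
  rcases eq_or_ne q 0 with hq0 | hq0
  · -- then r = 0, p ≠ 0; use the swap automorphism σ
    have hr0 : r = 0 := by
      have : r ^ 2 = 0 := by rw [hq0] at hquad; linarith
      exact pow_eq_zero_iff (n := 2) (by norm_num) |>.mp this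
    have hp0 : p ≠ 0 := by
      intro hp0
      apply hφ
      refine b.ext fun i => ?_
      fin_cases i
      · exact hp0
      · exact hq0
      · exact hr0
    set M : Fin 3 → L := ![-(b 1), -(b 0), -(b 2)] with hM
    have hM0 : M 0 = -(b 1) := rfl
    have hM1 : M 1 = -(b 0) := rfl
    have hM2 : M 2 = -(b 2) := rfl
    have k0 : b.constr ℝ M (M 0) = b 0 := by
      rw [hM0, map_neg, Basis.constr_basis, hM1, neg_neg]
    have k1 : b.constr ℝ M (M 1) = b 1 := by
      rw [hM1, map_neg, Basis.constr_basis, hM0, neg_neg]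
    have k2 : b.constr ℝ M (M 2) = b 2 := by
      rw [hM2, map_neg, Basis.constr_basis, hM2, neg_neg]
    have key1 : ∀ i, b.constr ℝ M (M i) = b i := by
      intro i
      fin_cases i
      · exact k0
      · exact k1
      · exact k2
    have kb01 : b.constr ℝ M ⁅b 0, b 1⁆ = ⁅M 0, M 1⁆ := by
      rw [h12, Basis.constr_basis, hM0, hM1, hM2, neg_lie, lie_neg, neg_neg, h21]
    have kb20 : b.constr ℝ M ⁅b 2, b 0⁆ = ⁅M 2, M 0⁆ := by
      rw [h31, map_smul, Basis.constr_basis, hM2, hM0, neg_lie, lie_neg, neg_neg, h32]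
      module
    have kb21 : b.constr ℝ M ⁅b 2, b 1⁆ = ⁅M 2, M 1⁆ := by
      rw [h32, map_smul, Basis.constr_basis, hM2, hM1, neg_lie, lie_neg, neg_neg, h31]
      module
    refine ⟨mkAut b M M key1 key1 kb01 kb20 kb21, -1/p, by simpa using hp0, ?_⟩
    rw [mkAut_coe]
    refine b.ext fun i => ?_
    have c0 : (b.coord 1).comp (b.constr ℝ M) (b 0) = -1 := by
      simp [Basis.constr_basis, hM0, Basis.coord_apply]
    have c1 : (b.coord 1).comp (b.constr ℝ M) (b 1) = 0 := by
      simp [Basis.constr_basis, hM1, Basis.coord_apply]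
    have c2 : (b.coord 1).comp (b.constr ℝ M) (b 2) = 0 := by
      simp [Basis.constr_basis, hM2, Basis.coord_apply]
    have d0 : ((-1/p) • φ) (b 0) = -1 := by
      rw [LinearMap.smul_apply, ← hp, smul_eq_mul]
      field_simp
    have d1 : ((-1/p) • φ) (b 1) = 0 := by
      rw [LinearMap.smul_apply, ← hq, hq0, smul_eq_mul, mul_zero]
    have d2 : ((-1/p) • φ) (b 2) = 0 := by
      rw [LinearMap.smul_apply, ← hr, hr0, smul_eq_mul, mul_zero]
    fin_cases i
    · exact c0.trans d0.symm
    · exact c1.trans d1.symm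
    · exact c2.trans d2.symm
  · -- q ≠ 0
    set M : Fin 3 → L :=
      ![(1/q) • b 0 + p • b 1 + (-(r/(2*q))) • b 2, q • b 1, r • b 1 + b 2] with hM
    set N : Fin 3 → L :=
      ![q • b 0 + p • b 1 + (r/2) • b 2, (1/q) • b 1, (-(r/q)) • b 1 + b 2] with hN
    have hM0 : M 0 = (1/q) • b 0 + p • b 1 + (-(r/(2*q))) • b 2 := rfl
    have hM1 : M 1 = q • b 1 := rfl
    have hM2 : M 2 = r • b 1 + b 2 := rfl
    have hN0 : N 0 = q • b 0 + p • b 1 + (r/2) • b 2 := rfl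
    have hN1 : N 1 = (1/q) • b 1 := rfl
    have hN2 : N 2 = (-(r/q)) • b 1 + b 2 := rfl
    have k0 : b.constr ℝ M (N 0) = b 0 := by
      rw [hN0, map_add, map_add, map_smul, map_smul, map_smul,
        Basis.constr_basis, Basis.constr_basis, Basis.constr_basis, hM0, hM1, hM2]
      match_scalars <;>
        (field_simp
         try ring1
         try linear_combination (1 - 2*q) * hquad
         try linear_combination (2 - 2*q) * hquad
         try linear_combination q * hquad
         try linear_combination 2 * q * hquad
         try linear_combination hquad
         try linear_combination 2 * hquad
         try linear_combination (q - q^2) * hquad)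
    have k1 : b.constr ℝ M (N 1) = b 1 := by
      rw [hN1, map_smul, Basis.constr_basis, hM1]
      match_scalars <;>
        (field_simp
         try ring1
         try linear_combination (1 - 2*q) * hquad
         try linear_combination (2 - 2*q) * hquad
         try linear_combination q * hquad
         try linear_combination 2 * q * hquad
         try linear_combination hquad
         try linear_combination 2 * hquad
         try linear_combination (q - q^2) * hquad)
    have k2 : b.constr ℝ M (N 2) = b 2 := by
      rw [hN2, map_add, map_smul, Basis.constr_basis, Basis.constr_basis, hM1, hM2]
      match_scalars <;>
        (field_simp
         try ring1
         try linear_combination (1 - 2*q) * hquad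
         try linear_combination (2 - 2*q) * hquad
         try linear_combination q * hquad
         try linear_combination 2 * q * hquad
         try linear_combination hquad
         try linear_combination 2 * hquad
         try linear_combination (q - q^2) * hquad)
    have l0 : b.constr ℝ N (M 0) = b 0 := by
      rw [hM0, map_add, map_add, map_smul, map_smul, map_smul,
        Basis.constr_basis, Basis.constr_basis, Basis.constr_basis, hN0, hN1, hN2]
      match_scalars <;>
        (field_simp
         try ring1
         try linear_combination (1 - 2*q) * hquad
         try linear_combination (2 - 2*q) * hquad
         try linear_combination q * hquad
         try linear_combination 2 * q * hquad
         try linear_combination hquad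
         try linear_combination 2 * hquad
         try linear_combination (q - q^2) * hquad)
    have l1 : b.constr ℝ N (M 1) = b 1 := by
      rw [hM1, map_smul, Basis.constr_basis, hN1]
      match_scalars <;>
        (field_simp
         try ring1
         try linear_combination (1 - 2*q) * hquad
         try linear_combination (2 - 2*q) * hquad
         try linear_combination q * hquad
         try linear_combination 2 * q * hquad
         try linear_combination hquad
         try linear_combination 2 * hquad
         try linear_combination (q - q^2) * hquad)
    have l2 : b.constr ℝ N (M 2) = b 2 := by
      rw [hM2, map_add, map_smul, Basis.constr_basis, Basis.constr_basis, hN1, hN2]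
      match_scalars <;>
        (field_simp
         try ring1
         try linear_combination (1 - 2*q) * hquad
         try linear_combination (2 - 2*q) * hquad
         try linear_combination q * hquad
         try linear_combination 2 * q * hquad
         try linear_combination hquad
         try linear_combination 2 * hquad
         try linear_combination (q - q^2) * hquad)
    have key1 : ∀ i, b.constr ℝ M (N i) = b i := by
      intro i
      fin_cases i
      · exact k0
      · exact k1
      · exact k2
    have key2 : ∀ i, b.constr ℝ N (M i) = b i := by
      intro i
      fin_cases i
      · exact l0
      · exact l1
      · exact l2
    have kb01 : b.constr ℝ M ⁅b 0, b 1⁆ = ⁅M 0, M 1⁆ := by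
      rw [h12, Basis.constr_basis, hM0, hM1, hM2]
      simp only [lie_add, add_lie, lie_smul, smul_lie, lie_self, h12, h21, h02, h12', h31, h32]
      match_scalars <;>
        (field_simp
         try ring1
         try linear_combination (1 - 2*q) * hquad
         try linear_combination (2 - 2*q) * hquad
         try linear_combination q * hquad
         try linear_combination 2 * q * hquad
         try linear_combination hquad
         try linear_combination 2 * hquad
         try linear_combination (q - q^2) * hquad)
    have kb20 : b.constr ℝ M ⁅b 2, b 0⁆ = ⁅M 2, M 0⁆ := by
      rw [h31, map_smul, Basis.constr_basis, hM2, hM0]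
      simp only [lie_add, add_lie, lie_smul, smul_lie, lie_self, h12, h21, h02, h12', h31, h32]
      match_scalars <;>
        (field_simp
         try ring1
         try linear_combination (1 - 2*q) * hquad
         try linear_combination (2 - 2*q) * hquad
         try linear_combination q * hquad
         try linear_combination 2 * q * hquad
         try linear_combination hquad
         try linear_combination 2 * hquad
         try linear_combination (q - q^2) * hquad)
    have kb21 : b.constr ℝ M ⁅b 2, b 1⁆ = ⁅M 2, M 1⁆ := by
      rw [h32, map_smul, Basis.constr_basis, hM2, hM1]
      simp only [lie_add, add_lie, lie_smul, smul_lie, lie_self, h12, h21, h02, h12', h31, h32]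
      match_scalars <;>
        (field_simp
         try ring1
         try linear_combination (1 - 2*q) * hquad
         try linear_combination (2 - 2*q) * hquad
         try linear_combination q * hquad
         try linear_combination 2 * q * hquad
         try linear_combination hquad
         try linear_combination 2 * hquad
         try linear_combination (q - q^2) * hquad)
    have key1 : ∀ i, b.constr ℝ M (N i) = b i := by
      intro i
      fin_cases i
      · exact k0
      · exact k1
      · exact k2
    have key2 : ∀ i, b.constr ℝ N (M i) = b i := by
      intro i
      fin_cases i
      · exact l0
      · exact l1
      · exact l2
    refine ⟨mkAut b M N key1 key2 kb01 kb20 kb21, 1, one_ne_zero, ?_⟩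
    rw [mkAut_coe, one_smul]
    refine b.ext fun i => ?_
    have c0 : (b.coord 1).comp (b.constr ℝ M) (b 0) = p := by
      simp [Basis.constr_basis, hM0, Basis.coord_apply]
    have c1 : (b.coord 1).comp (b.constr ℝ M) (b 1) = q := by
      simp [Basis.constr_basis, hM1, Basis.coord_apply]
    have c2 : (b.coord 1).comp (b.constr ℝ M) (b 2) = r := by
      simp [Basis.constr_basis, hM2, Basis.coord_apply]
    fin_cases i
    · exact c0.trans hp
    · exact c1.trans hq
    · exact c2.trans hr

end SL2Aux

/-- For a Lie algebra automorphism `F` of `g`, the induced automorphism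
`T*F = (F, (F⁻¹)*)` of the `T*`-extension: `T*F(u + α) = (F u, α ∘ F⁻¹)`. -/
def tstarAut {L : Type*} [LieRing L] [LieAlgebra ℝ L] (F : L ≃ₗ⁅ℝ⁆ L) :
    (L × Module.Dual ℝ L) →ₗ[ℝ] (L × Module.Dual ℝ L) :=
  LinearMap.prodMap F.toLinearEquiv.toLinearMap
    F.symm.toLinearEquiv.toLinearMap.dualMap

/-- Every 5-dimensional Lie subalgebra of `T*sl(2,ℝ)` that is degenerate with respect to
the canonical bilinear form can be mapped, by `T*F` for some automorphism `F` of
`sl(2,ℝ)`, onto `span(e₁,e₃) ⊕ sl(2,ℝ)*`.  Here `sl(2,ℝ)` has basis `e₁, e₂, e₃` with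
`[e₁,e₂] = e₃`, `[e₃,e₁] = 2e₁`, `[e₃,e₂] = −2e₂`. -/
theorem tstar_sl2_five_dim_degenerate_subalgebra
    {L : Type*} [LieRing L] [LieAlgebra ℝ L]
    (b : Module.Basis (Fin 3) ℝ L)
    (h12 : ⁅b 0, b 1⁆ = b 2)
    (h31 : ⁅b 2, b 0⁆ = (2 : ℝ) • b 0)
    (h32 : ⁅b 2, b 1⁆ = (-2 : ℝ) • b 1)
    (H : LieSubalgebra ℝ (L × Module.Dual ℝ L))
    (hdim : Module.finrank ℝ H = 5)
    (hdeg : ∃ x ∈ H, x ≠ 0 ∧ ∀ y ∈ H, tstarForm x y = 0) :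
    ∃ F : L ≃ₗ⁅ℝ⁆ L,
      Submodule.map (tstarAut F) H.toSubmodule =
        (Submodule.span ℝ {b 0, b 2}).prod (⊤ : Submodule ℝ (Module.Dual ℝ L)) := by
  classical
  haveI : FiniteDimensional ℝ L := Module.Finite.of_basis b
  have hfinL : Module.finrank ℝ L = 3 := by
    rw [Module.finrank_eq_card_basis b, Fintype.card_fin]
  have hfinD : Module.finrank ℝ (Module.Dual ℝ L) = 3 := by
    rw [Subspace.dual_finrank_eq]; exact hfinL
  set S : Submodule ℝ (L × Module.Dual ℝ L) := H.toSubmodule with hSdef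
  have hSlie : ∀ {x y : L × Module.Dual ℝ L}, x ∈ S → y ∈ S → ⁅x, y⁆ ∈ S :=
    fun hx hy => H.lie_mem hx hy
  set N : Submodule ℝ (Module.Dual ℝ L) :=
    S.comap (LinearMap.inr ℝ L (Module.Dual ℝ L)) with hNdef
  set K : Submodule ℝ L := S.map (LinearMap.fst ℝ L (Module.Dual ℝ L)) with hKdef
  have hdimS : Module.finrank ℝ S = 5 := hdim
  have hKN : Module.finrank ℝ K + Module.finrank ℝ N = 5 := by
    have hrk := LinearMap.finrank_range_add_finrank_ker
      ((LinearMap.fst ℝ L (Module.Dual ℝ L)).domRestrict S)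
    rw [LinearMap.range_domRestrict, LinearMap.ker_domRestrict, hdimS] at hrk
    have e1 : Submodule.comap S.subtype (LinearMap.ker (LinearMap.fst ℝ L (Module.Dual ℝ L)))
        = Submodule.comap S.subtype (S ⊓ LinearMap.ker (LinearMap.fst ℝ L (Module.Dual ℝ L))) := by
      ext x
      simp [Submodule.mem_comap, x.2]
    have e3 : S ⊓ LinearMap.ker (LinearMap.fst ℝ L (Module.Dual ℝ L))
        = Submodule.map (LinearMap.inr ℝ L (Module.Dual ℝ L)) N := by
      rw [hNdef, Submodule.map_comap_eq, LinearMap.range_inr]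
      exact inf_comm _ _
    have e4 : Module.finrank ℝ
        (Submodule.comap S.subtype (LinearMap.ker (LinearMap.fst ℝ L (Module.Dual ℝ L))))
        = Module.finrank ℝ N := by
      rw [e1]
      rw [(Submodule.comapSubtypeEquivOfLe
        (inf_le_left : S ⊓ LinearMap.ker (LinearMap.fst ℝ L (Module.Dual ℝ L)) ≤ S)).finrank_eq]
      rw [e3]
      exact (Submodule.equivMapOfInjective _ LinearMap.inr_injective N).finrank_eq.symm
    rw [e4] at hrk
    exact hrk
  have hNtop : N = ⊤ := by
    by_contra hne
    have hNlt : Module.finrank ℝ N < 3 := by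
      have := Submodule.finrank_lt hne
      omega
    have hKle : Module.finrank ℝ K ≤ 3 := hfinL ▸ Submodule.finrank_le K
    have hK3 : Module.finrank ℝ K = 3 := by omega
    have hN2 : Module.finrank ℝ N = 2 := by omega
    have hKtop : K = ⊤ := Submodule.eq_top_of_finrank_eq (by rw [hK3, hfinL])
    refine no_invariant_two_dim b h12 h31 h32 N hN2 ?_
    intro α hα u
    have hu : u ∈ K := hKtop ▸ Submodule.mem_top
    obtain ⟨x, hxS, hx1⟩ := Submodule.mem_map.mp hu
    have hαS : ((0 : L), α) ∈ S := Submodule.mem_comap.mp hα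
    have hbr := hSlie hxS hαS
    have hval : ⁅x, ((0 : L), α)⁆ = ((0 : L), ⁅u, α⁆) := by
      have hx1' : x.1 = u := hx1
      show (⁅x.1, (0 : L)⁆, ⁅x.1, α⁆ - ⁅(0 : L), x.2⁆) = ((0 : L), ⁅u, α⁆)
      rw [hx1', lie_zero, zero_lie, sub_zero]
    rw [Submodule.mem_comap]
    show ((0 : L), ⁅u, α⁆) ∈ S
    rw [← hval]
    exact hbr
  have hS_eq : S = K.prod ⊤ := by
    apply le_antisymm
    · intro x hx
      exact Submodule.mem_prod.mpr ⟨Submodule.mem_map_of_mem hx, trivial⟩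
    · rintro ⟨u, α⟩ hx
      obtain ⟨hu, -⟩ := Submodule.mem_prod.mp hx
      obtain ⟨y, hyS, hy1⟩ := Submodule.mem_map.mp hu
      have h2 : ((0 : L), α - y.2) ∈ S := by
        have hmem : (α - y.2) ∈ N := hNtop ▸ Submodule.mem_top
        exact Submodule.mem_comap.mp hmem
      have h3 := S.add_mem hyS h2
      have heq : y + ((0 : L), α - y.2) = (u, α) := by
        have hy1' : y.1 = u := hy1
        refine Prod.ext ?_ ?_
        · show y.1 + 0 = u
          rw [add_zero, hy1']
        · show y.2 + (α - y.2) = α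
          abel
      rwa [heq] at h3
  have hNfin : Module.finrank ℝ N = 3 := by
    rw [hNtop, finrank_top]; exact hfinD
  have hK2 : Module.finrank ℝ K = 2 := by omega
  have hKlie : ∀ u v : L, u ∈ K → v ∈ K → ⁅u, v⁆ ∈ K := by
    intro u v hu hv
    obtain ⟨x, hx, hx1⟩ := Submodule.mem_map.mp hu
    obtain ⟨y, hy, hy1⟩ := Submodule.mem_map.mp hv
    refine Submodule.mem_map.mpr ⟨⁅x, y⁆, hSlie hx hy, ?_⟩
    show ⁅x, y⁆.1 = ⁅u, v⁆
    have hxy : ⁅x, y⁆.1 = ⁅x.1, y.1⁆ := rfl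
    rw [hxy, show x.1 = u from hx1, show y.1 = v from hy1]
  have hquot : Module.finrank ℝ (L ⧸ K) = 1 := by
    have := Submodule.finrank_quotient_add_finrank K
    omega
  have hannfin : Module.finrank ℝ K.dualAnnihilator = 1 := by
    rw [← (Subspace.quotEquivAnnihilator K).finrank_eq]
    exact hquot
  obtain ⟨φ, hφmem, hφ0⟩ := Submodule.exists_mem_ne_zero_of_ne_bot
    (p := K.dualAnnihilator) (by
      intro hbot
      rw [hbot, finrank_bot] at hannfin
      omega)
  have hKsub : K ≤ LinearMap.ker φ := by
    intro w hw
    rw [LinearMap.mem_ker]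
    exact (Submodule.mem_dualAnnihilator φ).mp hφmem w hw
  have hkerfin : Module.finrank ℝ (LinearMap.ker φ) = 2 := by
    have h1 := LinearMap.finrank_range_add_finrank_ker φ
    have hrange : LinearMap.range φ = ⊤ := by
      obtain ⟨x, hx⟩ : ∃ x, φ x ≠ 0 := by
        by_contra hc
        push_neg at hc
        exact hφ0 (LinearMap.ext fun x => hc x)
      rw [LinearMap.range_eq_top]
      intro t
      refine ⟨(t / φ x) • x, ?_⟩
      rw [map_smul, smul_eq_mul]
      field_simp
    rw [hrange, finrank_top, Module.finrank_self, hfinL] at h1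
    omega
  have hKker : K = LinearMap.ker φ :=
    Submodule.eq_of_le_of_finrank_eq hKsub (by rw [hK2, hkerfin])
  have hcl : ∀ u v : L, φ u = 0 → φ v = 0 → φ ⁅u, v⁆ = 0 := by
    intro u v hu hv
    have hu' : u ∈ K := hKker ▸ LinearMap.mem_ker.mpr hu
    have hv' : v ∈ K := hKker ▸ LinearMap.mem_ker.mpr hv
    have := hKlie u v hu' hv'
    rw [hKker] at this
    exact this
  have hquad := quadric b h12 h31 h32 φ hφ0 hcl
  obtain ⟨F, c, hc0, hFc⟩ := exists_aut b h12 h31 h32 φ hφ0 hquad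
  refine ⟨F, ?_⟩
  have hmapK : Submodule.map (F.toLinearEquiv : L →ₗ[ℝ] L) K
      = Submodule.span ℝ {b 0, b 2} := by
    rw [span_b0_b2 b, hKker, Submodule.map_equiv_eq_comap_symm, ← LinearMap.ker_comp]
    have hcoord : (b.coord 1)
        = c • (φ.comp (F.toLinearEquiv.symm : L →ₗ[ℝ] L)) := by
      refine LinearMap.ext fun x => ?_
      have hx := LinearMap.congr_fun hFc (F.toLinearEquiv.symm x)
      simpa only [LinearMap.coe_comp, Function.comp_apply, LinearEquiv.coe_coe,
        LinearEquiv.apply_symm_apply, LinearMap.smul_apply, smul_eq_mul] using hx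
    rw [hcoord, LinearMap.ker_smul _ c hc0]
  have hmapD : Submodule.map
      ((F.symm.toLinearEquiv : L →ₗ[ℝ] L).dualMap)
      (⊤ : Submodule ℝ (Module.Dual ℝ L)) = ⊤ := by
    rw [Submodule.map_top, LinearMap.range_eq_top]
    intro ψ
    refine ⟨ψ.comp (F.toLinearEquiv : L →ₗ[ℝ] L), ?_⟩
    refine LinearMap.ext fun x => ?_
    simp [LinearMap.dualMap_apply]
  rw [hS_eq]
  ext ⟨u, α⟩
  constructor
  · rintro ⟨⟨y, β⟩, hmem, hxy⟩
    obtain ⟨hy, -⟩ := Submodule.mem_prod.mp hmem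
    have h1 : (F.toLinearEquiv : L →ₗ[ℝ] L) y = u := congrArg Prod.fst hxy
    refine Submodule.mem_prod.mpr ⟨?_, trivial⟩
    rw [← hmapK]
    exact Submodule.mem_map.mpr ⟨y, hy, h1⟩
  · intro hmem
    obtain ⟨hu, -⟩ := Submodule.mem_prod.mp hmem
    rw [← hmapK] at hu
    obtain ⟨y, hy, hy1⟩ := Submodule.mem_map.mp hu
    have hsurj : LinearMap.range ((F.symm.toLinearEquiv : L →ₗ[ℝ] L).dualMap) = ⊤ := by
      rw [← Submodule.map_top]
      exact hmapD
    obtain ⟨β, hβ⟩ := LinearMap.range_eq_top.mp hsurj α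
    refine ⟨(y, β), Submodule.mem_prod.mpr ⟨hy, trivial⟩, ?_⟩
    refine Prod.ext ?_ ?_
    · exact hy1
    · exact hβ
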